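/- Kemperman's formula: if (S_i)_{i≥0} is a simple random walk on ℤ started at 0 (i.i.d. increments uniform on {−1,+1}), and T_j = inf{i ≥ 0 : S_i = j} denotes the first hitting time of j ∈ ℤ, then for every j ∈ ℤ \ {0} and k ∈ ℕ, P(T_j = k) = (|j|/k) · P(S_k = j). -/

import Mathlib

def walkSum (k : ℕ) (ε : Fin k → ℤ) (m : ℕ) : ℤ :=
  ∑ i : Fin k, if (i : ℕ) < m then ε i else 0

namespace Kemp
variable {k : ℕ}

def stp (b : Fin k → Bool) (n : ℕ) : ℤ :=
  if h : n % k < k then (if b ⟨n % k, h⟩ then 1 else -1) else 0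

def wS (b : Fin k → Bool) : ℕ → ℤ
  | 0 => 0
  | n + 1 => wS b n + stp b n

lemma stp_one_or (hk : 0 < k) (b : Fin k → Bool) (n : ℕ) :
    stp b n = 1 ∨ stp b n = -1 := by
  unfold stp
  rw [dif_pos (Nat.mod_lt n hk)]
  split <;> simp

lemma stp_period (b : Fin k → Bool) (n : ℕ) : stp b (n + k) = stp b n := by
  unfold stp
  simp [Nat.add_mod_right]

lemma wS_add (b : Fin k → Bool) (n : ℕ) : wS b (n + k) = wS b n + wS b k := by
  induction n with
  | zero => simp [wS]
  | succ n ih =>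
      have : n + 1 + k = (n + k) + 1 := by omega
      rw [this]
      show wS b (n + k) + stp b (n + k) = _
      rw [ih, stp_period]
      show _ = wS b n + stp b n + wS b k
      ring

lemma ivt (hk : 0 < k) (b : Fin k → Bool) (v : ℤ) :
    ∀ n a, wS b a ≤ v → v ≤ wS b (a + n) → ∃ u, a ≤ u ∧ u ≤ a + n ∧ wS b u = v := by
  intro n
  induction n with
  | zero =>
      intro a h1 h2
      exact ⟨a, le_refl _, by omega, le_antisymm h1 (by simpa using h2)⟩
  | succ n ih =>
      intro a h1 h2
      by_cases hc : v ≤ wS b (a + n)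
      · obtain ⟨u, hu⟩ := ih a h1 hc
        exact ⟨u, hu.1, by omega, hu.2.2⟩
      · push_neg at hc
        have heq : wS b (a + (n+1)) = wS b (a + n) + stp b (a + n) := by
          have : a + (n+1) = (a + n) + 1 := by omega
          rw [this]; rfl
        refine ⟨a + n + 1, by omega, by omega, ?_⟩
        have h3 : wS b (a + n + 1) = wS b (a + n) + stp b (a + n) := rfl
        rcases stp_one_or hk b (a + n) with hs | hs <;> omega


section records

/-- maximum of the walk over the first period `[0,k)`. -/
noncomputable def M (hk : 0 < k) (b : Fin k → Bool) : ℤ :=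
  Finset.sup' (Finset.range k) (by simp [Finset.nonempty_range_iff]; omega) (fun u => wS b u)

lemma le_M (hk : 0 < k) (b : Fin k → Bool) {u : ℕ} (hu : u < k) : wS b u ≤ M hk b :=
  Finset.le_sup' _ (by simpa using hu)

lemma exists_M (hk : 0 < k) (b : Fin k → Bool) : ∃ u < k, wS b u = M hk b := by
  obtain ⟨u, hu, h⟩ := Finset.exists_mem_eq_sup' (s := Finset.range k)
    (by simp [Finset.nonempty_range_iff]; omega) (fun u => wS b u)
  exact ⟨u, by simpa using hu, h.symm⟩

lemma M_nonneg (hk : 0 < k) (b : Fin k → Bool) : 0 ≤ M hk b := by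
  have := le_M hk b (u := 0) hk
  simpa [wS] using this

lemma card_records (hk : 0 < k) (b : Fin k → Bool) {j : ℤ} (hj : wS b k = j) (hjpos : 0 < j) :
    ((Finset.Ico k (2*k)).filter (fun s => ∀ u < s, wS b u < wS b s)).card = j.toNat := by
  rw [show j.toNat = (Finset.Ioc (M hk b) (M hk b + j)).card by
    rw [Int.card_Ioc]; simp]
  apply Finset.card_nbij (i := fun s => wS b s)
  · -- maps into Ioc
    intro s hs
    simp only [Finset.mem_coe, Finset.mem_filter, Finset.mem_Ico] at hs
    obtain ⟨⟨hks, hs2k⟩, hrec⟩ := hs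
    obtain ⟨u₀, hu₀k, hu₀⟩ := exists_M hk b
    simp only [Finset.mem_coe, Finset.mem_Ioc]
    constructor
    · rw [← hu₀]; exact hrec u₀ (lt_of_lt_of_le hu₀k hks)
    · have h1 : wS b s = wS b (s - k) + j := by
        have : s = (s - k) + k := by omega
        rw [this, wS_add, hj]; rw [← this]
      have h2 : wS b (s - k) ≤ M hk b := le_M hk b (by omega)
      omega
  · -- injective
    intro s hs s' hs' hss
    have hss' : wS b s = wS b s' := hss
    simp only [Finset.coe_filter, Set.mem_setOf_eq, Finset.mem_Ico] at hs hs'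
    rcases lt_trichotomy s s' with h | h | h
    · exact absurd hss' (by have := hs'.2 s h; omega)
    · exact h
    · exact absurd hss' (by have := hs.2 s' h; omega)
  · -- surjective
    intro v hv
    simp only [Finset.coe_Ioc, Set.mem_Ioc] at hv
    obtain ⟨u₀, hu₀k, hu₀⟩ := exists_M hk b
    have hv0 : 0 ≤ v := le_trans (M_nonneg hk b) (le_of_lt hv.1)
    have hvtop : v ≤ wS b (u₀ + k) := by rw [wS_add, hj, hu₀]; exact hv.2
    have hex : ∃ u, wS b u = v := by
      obtain ⟨u, _, _, hu⟩ := ivt hk b v (u₀ + k) 0 (by simpa [wS] using hv0)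
        (by simpa using hvtop)
      exact ⟨u, hu⟩
    classical
    set s := Nat.find hex with hsdef
    have hsv : wS b s = v := Nat.find_spec hex
    have hsle : s ≤ u₀ + k := by
      obtain ⟨u, _, hu2, hu3⟩ := ivt hk b v (u₀ + k) 0 (by simpa [wS] using hv0)
        (by simpa using hvtop)
      exact le_trans (Nat.find_min' hex hu3) (by omega)
    have hks : k ≤ s := by
      by_contra h
      push_neg at h
      have := le_M hk b h (u := s)
      omega
    refine ⟨s, ?_, hsv⟩
    simp only [Finset.coe_filter, Set.mem_setOf_eq, Finset.mem_Ico]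
    refine ⟨⟨hks, by omega⟩, ?_⟩
    intro u hu
    have hne : wS b u ≠ v := Nat.find_min hex hu
    by_contra hge
    push_neg at hge
    have : v ≤ wS b u := by omega
    obtain ⟨u', _, hu'2, hu'3⟩ := ivt hk b v u 0 (by simpa [wS] using hv0) (by simpa using this)
    have := Nat.find_min' hex hu'3
    omega

lemma card_good (hk : 0 < k) (b : Fin k → Bool) {j : ℤ} (hj : wS b k = j) (hjpos : 0 < j) :
    (Finset.univ.filter
      (fun t : Fin k => ∀ m < k, wS b (t.1 + m) < wS b (t.1 + k))).card = j.toNat := by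
  rw [← card_records hk b hj hjpos]
  apply Finset.card_nbij (i := fun t => t.1 + k)
  · intro t ht
    simp only [Finset.mem_coe, Finset.mem_filter, Finset.mem_univ, true_and] at ht
    simp only [Finset.mem_coe, Finset.mem_filter, Finset.mem_Ico]
    refine ⟨⟨by omega, by have := t.2; omega⟩, ?_⟩
    intro u hu
    rcases le_or_gt t.1 u with h | h
    · have := ht (u - t.1) (by have := t.2; omega)
      rw [show t.1 + (u - t.1) = u by omega] at this
      exact this
    · have h1 : wS b (u + k) = wS b u + j := by rw [wS_add, hj]
      have h2 := ht (u + k - t.1) (by have := t.2; omega)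
      rw [show t.1 + (u + k - t.1) = u + k by have := t.2; omega] at h2
      omega
  · intro t _ t' _ h
    have h' : t.1 + k = t'.1 + k := h
    exact Fin.ext (by omega)
  · intro s hs
    simp only [Finset.coe_filter, Set.mem_setOf_eq, Finset.mem_Ico] at hs
    obtain ⟨⟨hks, hs2k⟩, hrec⟩ := hs
    refine ⟨⟨s - k, by omega⟩, ?_, by simp; omega⟩
    simp only [Finset.coe_filter, Set.mem_setOf_eq, Finset.mem_univ, true_and]
    intro m hm
    rw [show s - k + k = s by omega]
    exact hrec (s - k + m) (by omega)
end records

/-- decode a Bool sequence into ±1 increments -/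
def eps (b : Fin k → Bool) : Fin k → ℤ := fun i => if b i then 1 else -1

lemma walkSum_zero (ε : Fin k → ℤ) : walkSum k ε 0 = 0 := by
  simp [walkSum]

lemma walkSum_succ (ε : Fin k → ℤ) {m : ℕ} (hm : m < k) :
    walkSum k ε (m+1) = walkSum k ε m + ε ⟨m, hm⟩ := by
  unfold walkSum
  have : ∀ i : Fin k, (if (i:ℕ) < m + 1 then ε i else 0)
      = (if (i:ℕ) < m then ε i else 0) + (if i = ⟨m, hm⟩ then ε i else 0) := by
    intro i
    rcases eq_or_ne i ⟨m, hm⟩ with h | h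
    · subst h; simp
    · have : (i : ℕ) ≠ m := fun hc => h (Fin.ext hc)
      simp only [if_neg h]
      split_ifs <;> omega
  rw [Finset.sum_congr rfl (fun i _ => this i), Finset.sum_add_distrib,
    Finset.sum_ite_eq' Finset.univ (⟨m, hm⟩ : Fin k) ε]
  simp

lemma walkSum_eps (b : Fin k → Bool) {m : ℕ} (hm : m ≤ k) :
    walkSum k (eps b) m = wS b m := by
  induction m with
  | zero => simp [walkSum_zero, wS]
  | succ m ih =>
      have hmk : m < k := hm
      rw [walkSum_succ _ hmk, ih (le_of_lt hmk)]
      show _ = wS b m + stp b m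
      congr 1
      unfold eps stp
      rw [dif_pos (Nat.mod_lt m (by omega))]
      congr 2 <;> simp [Nat.mod_eq_of_lt hmk]


section rot
variable [NeZero k]

/-- cyclic shift of a Bool sequence -/
def rot (t : Fin k) (b : Fin k → Bool) : Fin k → Bool := fun i => b (i + t)

lemma rot_rot (t s : Fin k) (b : Fin k → Bool) : rot t (rot s b) = rot (s + t) b := by
  funext i
  show b (i + t + s) = b (i + (s + t))
  rw [add_assoc, add_comm t s]

lemma rot_neg_rot (t : Fin k) (b : Fin k → Bool) : rot (-t) (rot t b) = b := by
  rw [rot_rot]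
  funext i
  show b (i + (t + -t)) = b i
  simp

lemma rot_rot_neg (t : Fin k) (b : Fin k → Bool) : rot t (rot (-t) b) = b := by
  rw [rot_rot]
  funext i
  show b (i + (-t + t)) = b i
  simp

lemma stp_rot (t : Fin k) (b : Fin k → Bool) (n : ℕ) :
    stp (rot t b) n = stp b (n + t.1) := by
  have hk : 0 < k := Nat.pos_of_ne_zero (NeZero.ne k)
  unfold stp rot
  rw [dif_pos (Nat.mod_lt n hk), dif_pos (Nat.mod_lt _ hk)]
  congr 2
  congr 1
  apply Fin.ext
  show ((n % k) + t.1) % k = (n + t.1) % k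
  exact Nat.mod_add_mod n k t.1

lemma wS_rot (t : Fin k) (b : Fin k → Bool) (m : ℕ) :
    wS (rot t b) m = wS b (t.1 + m) - wS b t.1 := by
  induction m with
  | zero => simp [wS]
  | succ m ih =>
      show wS (rot t b) m + stp (rot t b) m = _
      rw [ih, stp_rot]
      have : t.1 + (m + 1) = (m + t.1) + 1 := by omega
      rw [this]
      show _ = wS b (m + t.1) + stp b (m + t.1) - wS b t.1
      rw [show m + t.1 = t.1 + m by omega]
      ring

end rot

lemma key (hk : 0 < k) {j : ℤ} (hjpos : 0 < j) :
    k * (Finset.univ.filter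
          (fun b : Fin k → Bool => wS b k = j ∧ ∀ m < k, wS b m < j)).card
      = j.toNat * (Finset.univ.filter (fun b : Fin k → Bool => wS b k = j)).card := by
  haveI : NeZero k := ⟨hk.ne'⟩
  set A := Finset.univ.filter (fun b : Fin k → Bool => wS b k = j) with hA
  set F := Finset.univ.filter
    (fun b : Fin k → Bool => wS b k = j ∧ ∀ m < k, wS b m < j) with hF
  have memA : ∀ b : Fin k → Bool, b ∈ A ↔ wS b k = j := by
    intro b; simp [hA]
  have memF : ∀ b : Fin k → Bool, b ∈ F ↔ (wS b k = j ∧ ∀ m < k, wS b m < j) := by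
    intro b; simp [hF]
  have per : ∀ t : Fin k,
      (A.filter (fun b => ∀ m < k, wS b (t.1 + m) < wS b (t.1 + k))).card = F.card := by
    intro t
    apply Finset.card_bij' (i := fun b _ => rot t b) (j := fun c _ => rot (-t) c)
    · -- hi
      intro b hb
      rw [Finset.mem_filter] at hb
      obtain ⟨hbA, hgood⟩ := hb
      have hbj : wS b k = j := (memA b).mp hbA
      have htop : wS b (t.1 + k) = wS b t.1 + j := by rw [wS_add, hbj]
      rw [memF]
      constructor
      · rw [wS_rot, htop]; ring
      · intro m hm
        rw [wS_rot]
        have := hgood m hm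
        omega
    · -- hj
      intro c hc
      rw [memF] at hc
      have hcj : wS c k = j := hc.1
      have hb'A : wS (rot (-t) c) k = j := by
        rw [wS_rot, wS_add, hcj]; ring
      rw [Finset.mem_filter]
      refine ⟨(memA _).mpr hb'A, ?_⟩
      intro m hm
      have hrc : rot t (rot (-t) c) = c := rot_rot_neg t c
      have h1 : wS c m = wS (rot (-t) c) (t.1 + m) - wS (rot (-t) c) t.1 := by
        rw [← wS_rot, hrc]
      have h2 : wS (rot (-t) c) (t.1 + k) = wS (rot (-t) c) t.1 + j := by
        rw [wS_add, hb'A]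
      have := hc.2 m hm
      omega
    · intro b _; exact rot_neg_rot t b
    · intro c _; exact rot_rot_neg t c
  calc k * F.card = ∑ _t : Fin k, F.card := by
        simp [Finset.sum_const, Finset.card_univ]
    _ = ∑ t : Fin k,
        (A.filter (fun b => ∀ m < k, wS b (t.1 + m) < wS b (t.1 + k))).card :=
        Finset.sum_congr rfl (fun t _ => (per t).symm)
    _ = ∑ t : Fin k, ∑ b ∈ A,
        if (∀ m < k, wS b (t.1 + m) < wS b (t.1 + k)) then 1 else 0 :=
        Finset.sum_congr rfl (fun t _ => Finset.card_filter _ _)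
    _ = ∑ b ∈ A, ∑ t : Fin k,
        if (∀ m < k, wS b (t.1 + m) < wS b (t.1 + k)) then 1 else 0 :=
        Finset.sum_comm
    _ = ∑ b ∈ A, j.toNat := by
        refine Finset.sum_congr rfl (fun b hb => ?_)
        rw [← Finset.card_filter]
        exact card_good hk b ((memA b).mp hb) hjpos
    _ = j.toNat * A.card := by
        simp [Finset.sum_const, mul_comm]


lemma natCard_eq (P : (Fin k → ℤ) → Prop)
    [DecidablePred (fun b : Fin k → Bool => P (eps b))] :
    Nat.card {ε : Fin k → ℤ // (∀ i, ε i = 1 ∨ ε i = -1) ∧ P ε}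
      = (Finset.univ.filter (fun b : Fin k → Bool => P (eps b))).card := by
  have e : {ε : Fin k → ℤ // (∀ i, ε i = 1 ∨ ε i = -1) ∧ P ε}
      ≃ {b : Fin k → Bool // P (eps b)} :=
    { toFun := fun x => ⟨fun i => decide (x.1 i = 1), by
        have h : eps (fun i => decide (x.1 i = 1)) = x.1 := by
          funext i
          rcases x.2.1 i with h | h <;> simp [eps, h]
        rw [h]; exact x.2.2⟩
      invFun := fun y => ⟨eps y.1,
        fun i => by by_cases h : y.1 i <;> simp [eps, h], y.2⟩
      left_inv := fun x => Subtype.ext (by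
        funext i
        rcases x.2.1 i with h | h <;> simp [eps, h])
      right_inv := fun y => Subtype.ext (by
        funext i
        by_cases h : y.1 i <;> simp [eps, h]) }
  rw [Nat.card_congr e, Nat.card_eq_fintype_card, Fintype.card_subtype]

lemma fp_iff (hk : 0 < k) (b : Fin k → Bool) {j : ℤ} (hjpos : 0 < j) (hbj : wS b k = j) :
    (∀ m < k, wS b m ≠ j) ↔ (∀ m < k, wS b m < j) := by
  constructor
  · intro h m hm
    by_contra hge
    push_neg at hge
    have hlt : j < wS b m := lt_of_le_of_ne hge (fun e => h m hm e.symm)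
    obtain ⟨u, _, hu2, hu3⟩ := ivt hk b j m 0
      (by show wS b 0 ≤ j; show (0:ℤ) ≤ j; omega) (by simpa using hlt.le)
    exact h u (by omega) hu3
  · intro h m hm; exact (h m hm).ne

lemma key' (hk : 0 < k) {j : ℤ} (hjpos : 0 < j) :
    k * Nat.card {ε : Fin k → ℤ //
        (∀ i, ε i = 1 ∨ ε i = -1) ∧ walkSum k ε k = j ∧ ∀ m < k, walkSum k ε m ≠ j}
      = j.toNat * Nat.card {ε : Fin k → ℤ //
          (∀ i, ε i = 1 ∨ ε i = -1) ∧ walkSum k ε k = j} := by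
  classical
  rw [natCard_eq (P := fun ε => walkSum k ε k = j ∧ ∀ m < k, walkSum k ε m ≠ j),
      natCard_eq (P := fun ε => walkSum k ε k = j)]
  have h1 : ∀ b : Fin k → Bool,
      (walkSum k (eps b) k = j ∧ ∀ m < k, walkSum k (eps b) m ≠ j)
        ↔ (wS b k = j ∧ ∀ m < k, wS b m < j) := by
    intro b
    rw [walkSum_eps b le_rfl]
    constructor
    · rintro ⟨h, h2⟩
      refine ⟨h, (fp_iff hk b hjpos h).mp ?_⟩
      intro m hm
      rw [← walkSum_eps b hm.le]
      exact h2 m hm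
    · rintro ⟨h, h2⟩
      refine ⟨h, fun m hm => ?_⟩
      rw [walkSum_eps b hm.le]
      exact ((fp_iff hk b hjpos h).mpr h2) m hm
  have h2 : ∀ b : Fin k → Bool, (walkSum k (eps b) k = j) ↔ (wS b k = j) := fun b => by
    rw [walkSum_eps b le_rfl]
  rw [Finset.filter_congr (fun b _ => h1 b), Finset.filter_congr (fun b _ => h2 b)]
  exact key hk hjpos

lemma walkSum_neg (ε : Fin k → ℤ) (m : ℕ) : walkSum k (-ε) m = - walkSum k ε m := by
  unfold walkSum
  have h : ∀ i : Fin k,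
      (if (i:ℕ) < m then (-ε) i else 0) = -(if (i:ℕ) < m then ε i else 0) := by
    intro i; split <;> simp
  rw [Finset.sum_congr rfl (fun i _ => h i)]
  rw [Finset.sum_neg_distrib]

lemma neg_cond {ε : Fin k → ℤ} {c : ℤ}
    (h : (∀ i, ε i = 1 ∨ ε i = -1) ∧ walkSum k ε k = c ∧ ∀ m < k, walkSum k ε m ≠ c) :
    (∀ i, (-ε) i = 1 ∨ (-ε) i = -1) ∧ walkSum k (-ε) k = -c
      ∧ ∀ m < k, walkSum k (-ε) m ≠ -c := by
  obtain ⟨h1, h2, h3⟩ := h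
  refine ⟨fun i => ?_, by rw [walkSum_neg, h2], fun m hm => ?_⟩
  · rcases h1 i with h | h <;> simp [h]
  · rw [walkSum_neg]
    exact fun e => h3 m hm (by omega)

lemma neg_cond' {ε : Fin k → ℤ} {c : ℤ}
    (h : (∀ i, ε i = 1 ∨ ε i = -1) ∧ walkSum k ε k = c) :
    (∀ i, (-ε) i = 1 ∨ (-ε) i = -1) ∧ walkSum k (-ε) k = -c := by
  obtain ⟨h1, h2⟩ := h
  exact ⟨fun i => by rcases h1 i with h | h <;> simp [h], by rw [walkSum_neg, h2]⟩

lemma natCard_neg_FP (j : ℤ) :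
    Nat.card {ε : Fin k → ℤ //
        (∀ i, ε i = 1 ∨ ε i = -1) ∧ walkSum k ε k = j ∧ ∀ m < k, walkSum k ε m ≠ j}
      = Nat.card {ε : Fin k → ℤ //
          (∀ i, ε i = 1 ∨ ε i = -1) ∧ walkSum k ε k = -j ∧ ∀ m < k, walkSum k ε m ≠ -j} := by
  apply Nat.card_congr
  refine ⟨fun x => ⟨-x.1, neg_cond x.2⟩,
    fun y => ⟨-y.1, by have := neg_cond y.2; simpa using this⟩,
    fun x => Subtype.ext (by simp), fun y => Subtype.ext (by simp)⟩

lemma natCard_neg_A (j : ℤ) :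
    Nat.card {ε : Fin k → ℤ // (∀ i, ε i = 1 ∨ ε i = -1) ∧ walkSum k ε k = j}
      = Nat.card {ε : Fin k → ℤ // (∀ i, ε i = 1 ∨ ε i = -1) ∧ walkSum k ε k = -j} := by
  apply Nat.card_congr
  refine ⟨fun x => ⟨-x.1, neg_cond' x.2⟩,
    fun y => ⟨-y.1, by have := neg_cond' y.2; simpa using this⟩,
    fun x => Subtype.ext (by simp), fun y => Subtype.ext (by simp)⟩

end Kemp

open Kemp in
theorem kemperman (j : ℤ) (hj : j ≠ 0) (k : ℕ) (hk : 0 < k) :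
    (Nat.card {ε : Fin k → ℤ //
        (∀ i, ε i = 1 ∨ ε i = -1) ∧ walkSum k ε k = j ∧ ∀ m < k, walkSum k ε m ≠ j} : ℝ)
        / 2 ^ k
      = |(j : ℝ)| / k *
        ((Nat.card {ε : Fin k → ℤ // (∀ i, ε i = 1 ∨ ε i = -1) ∧ walkSum k ε k = j} : ℝ)
          / 2 ^ k) := by
  have hnat : k * Nat.card {ε : Fin k → ℤ //
        (∀ i, ε i = 1 ∨ ε i = -1) ∧ walkSum k ε k = j ∧ ∀ m < k, walkSum k ε m ≠ j}
      = (|j|).toNat * Nat.card {ε : Fin k → ℤ //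
          (∀ i, ε i = 1 ∨ ε i = -1) ∧ walkSum k ε k = j} := by
    rcases hj.lt_or_gt with hneg | hpos
    · rw [natCard_neg_FP, natCard_neg_A, abs_of_neg hneg]
      exact key' hk (by omega)
    · rw [abs_of_pos hpos]
      exact key' hk hpos
  have hcast : (k : ℝ) * (Nat.card {ε : Fin k → ℤ //
        (∀ i, ε i = 1 ∨ ε i = -1) ∧ walkSum k ε k = j ∧ ∀ m < k, walkSum k ε m ≠ j} : ℝ)
      = |(j : ℝ)| * (Nat.card {ε : Fin k → ℤ //
          (∀ i, ε i = 1 ∨ ε i = -1) ∧ walkSum k ε k = j} : ℝ) := by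
    have h1 : ((|j|).toNat : ℝ) = |(j : ℝ)| := by
      rw [show ((|j|).toNat : ℝ) = (((|j|).toNat : ℤ) : ℝ) by push_cast; ring,
        Int.toNat_of_nonneg (abs_nonneg j), Int.cast_abs]
    calc (k : ℝ) * _ = ((k * Nat.card {ε : Fin k → ℤ //
        (∀ i, ε i = 1 ∨ ε i = -1) ∧ walkSum k ε k = j ∧ ∀ m < k, walkSum k ε m ≠ j} : ℕ) : ℝ) := by
          push_cast; ring
      _ = (((|j|).toNat * Nat.card {ε : Fin k → ℤ //
          (∀ i, ε i = 1 ∨ ε i = -1) ∧ walkSum k ε k = j} : ℕ) : ℝ) := by rw [hnat]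
      _ = _ := by push_cast [h1]; ring
  have h2k : (2 : ℝ) ^ k ≠ 0 := by positivity
  have hkR : (k : ℝ) ≠ 0 := Nat.cast_ne_zero.mpr hk.ne'
  field_simp
  linear_combination hcast
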